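/- Suppose the closed-loop system ẋᵢ = x_{i+1} (i = 1,…,n-1), ẋₙ = v(t, x + η(t)) + d(t) on [0,T), with n ≥ 2, has an absolute deadline at T (with η ≡ 0). Then for every δ > 0, the controller v is unbounded on the set {(t,x) : t ∈ [0,T), ‖x‖_∞ ≤ δ}; i.e., sup_{‖x‖_∞ ≤ δ, t ∈ [0,T)} |v(t,x)| = ∞. -/

import Mathlib

open Set Filter Topology

/-- A solution, on `[s,T)`, of the closed-loop integrator chain
    ẋᵢ = x_{i+1} (i < n), ẋₙ = v(t, x + η(t)) + d(t). -/
def ChainSol (n : ℕ) (hn : 0 < n) (T : ℝ)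
    (v : ℝ → EuclideanSpace ℝ (Fin n) → ℝ) (d : ℝ → ℝ)
    (η : ℝ → EuclideanSpace ℝ (Fin n)) (s : ℝ)
    (x : ℝ → EuclideanSpace ℝ (Fin n)) : Prop :=
  ∀ t ∈ Set.Ico s T,
    (∀ i : Fin n, ∀ h : (i : ℕ) + 1 < n,
      HasDerivAt (fun τ => x τ i) (x t ⟨(i : ℕ) + 1, h⟩) t) ∧
    HasDerivAt (fun τ => x τ ⟨n - 1, Nat.sub_lt hn one_pos⟩)
      (v t (x t + η t) + d t) t

/-- Absolute deadline at `T` (with η ≡ 0). -/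
def ChainAbsDeadline (n : ℕ) (hn : 0 < n) (T : ℝ)
    (v : ℝ → EuclideanSpace ℝ (Fin n) → ℝ) (d : ℝ → ℝ) : Prop :=
  ∀ s ∈ Set.Ico (0:ℝ) T, ∀ x : ℝ → EuclideanSpace ℝ (Fin n),
    ChainSol n hn T v d (fun _ => 0) s x →
    Filter.Tendsto x (nhdsWithin T (Set.Iio T)) (nhds 0)

/-- Mean-value based bound: if `f` has derivative bounded by `C` on `[a,T)` and tends
to `0` at `T⁻`, then `|f a| ≤ C * (T - a)`. -/
lemma lipBound {f f' : ℝ → ℝ} {a Tv C : ℝ} (haT : a < Tv)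
    (hd : ∀ t ∈ Set.Ico a Tv, HasDerivAt f (f' t) t)
    (hb : ∀ t ∈ Set.Ico a Tv, |f' t| ≤ C)
    (hl : Filter.Tendsto f (nhdsWithin Tv (Set.Iio Tv)) (nhds 0)) :
    |f a| ≤ C * (Tv - a) := by
  have hC : 0 ≤ C := le_trans (abs_nonneg _) (hb a ⟨le_rfl, haT⟩)
  have key : ∀ b ∈ Set.Ico a Tv, |f b - f a| ≤ C * (Tv - a) := by
    intro b hbm
    have h1 : ∀ t ∈ Set.Icc a b, HasDerivWithinAt f (f' t) (Set.Icc a b) t :=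
      fun t ht => (hd t ⟨ht.1, lt_of_le_of_lt ht.2 hbm.2⟩).hasDerivWithinAt
    have h2 := Convex.norm_image_sub_le_of_norm_hasDerivWithin_le h1
      (fun t ht => hb t ⟨ht.1, lt_of_le_of_lt ht.2 hbm.2⟩) (convex_Icc a b)
      ⟨le_rfl, hbm.1⟩ ⟨hbm.1, le_rfl⟩
    have h3 : ‖(b:ℝ) - a‖ ≤ Tv - a := by
      rw [Real.norm_eq_abs, abs_of_nonneg (by linarith [hbm.1])]
      linarith [hbm.2]
    calc |f b - f a| = ‖f b - f a‖ := (Real.norm_eq_abs _).symm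
      _ ≤ C * ‖b - a‖ := h2
      _ ≤ C * (Tv - a) := mul_le_mul_of_nonneg_left h3 hC
  have htt : Filter.Tendsto (fun b => |f b - f a|) (nhdsWithin Tv (Set.Iio Tv))
      (nhds |0 - f a|) := (hl.sub_const (f a)).abs
  have hev : ∀ᶠ b in nhdsWithin Tv (Set.Iio Tv), |f b - f a| ≤ C * (Tv - a) := by
    filter_upwards [Ioo_mem_nhdsLT haT] with b hb2
    exact key b ⟨le_of_lt hb2.1, hb2.2⟩
  have := le_of_tendsto htt hev
  rwa [zero_sub, abs_neg] at this

lemma coordTendsto {n : ℕ} {T : ℝ} {x : ℝ → EuclideanSpace ℝ (Fin n)}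
    (hx : Filter.Tendsto x (nhdsWithin T (Set.Iio T)) (nhds 0)) (i : Fin n) :
    Filter.Tendsto (fun t => x t i) (nhdsWithin T (Set.Iio T)) (nhds 0) := by
  have hc := ((EuclideanSpace.proj (𝕜 := ℝ) i).continuous.tendsto 0).comp hx
  simpa [Function.comp_def] using hc

/-- From convergence to `0` at `T⁻`, extract a tail on which all coordinates are small. -/
lemma tailSmall {n : ℕ} {T r a : ℝ} (x : ℝ → EuclideanSpace ℝ (Fin n))
    (hx : Filter.Tendsto x (nhdsWithin T (Set.Iio T)) (nhds 0))
    (hr : 0 < r) (haT : a < T) :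
    ∃ s, a ≤ s ∧ s < T ∧ ∀ t ∈ Set.Ico s T, ∀ i, |x t i| ≤ r := by
  have hev : ∀ᶠ t in nhdsWithin T (Set.Iio T), ∀ i, |x t i| ≤ r := by
    rw [eventually_all]
    intro i
    have h1 := (coordTendsto hx i).abs
    rw [abs_zero] at h1
    exact h1.eventually (eventually_le_nhds hr)
  obtain ⟨l, hl, hsub⟩ := mem_nhdsLT_iff_exists_Ioo_subset.mp hev
  have hlT : l < T := hl
  refine ⟨max a ((l + T) / 2), le_max_left _ _, ?_, ?_⟩
  · exact max_lt haT (by linarith)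
  · intro t ht i
    have h1 : l < t := by
      have := le_trans (le_max_right a ((l + T) / 2)) ht.1
      linarith
    exact hsub ⟨h1, ht.2⟩ i

/-- Theorem 1(iii): under an absolute deadline at `T`, for every
    δ > 0 the controller v is unbounded on {(t,x) : t ∈ [0,T), ‖x‖_∞ ≤ δ}. -/
theorem stmt6 (n : ℕ) (hn : 2 ≤ n) (T : ℝ) (hT : 0 < T)
    (v : ℝ → EuclideanSpace ℝ (Fin n) → ℝ) (d : ℝ → ℝ)
    (hex : ∀ s ∈ Set.Ico (0:ℝ) T, ∀ ξ : EuclideanSpace ℝ (Fin n),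
      ∃ x : ℝ → EuclideanSpace ℝ (Fin n),
        ChainSol n (by omega) T v d (fun _ => 0) s x ∧ x s = ξ)
    (habs : ChainAbsDeadline n (by omega) T v d) :
    ∀ δ > (0:ℝ), ∀ M : ℝ, ∃ t ∈ Set.Ico (0:ℝ) T,
      ∃ y : EuclideanSpace ℝ (Fin n), (∀ i, |y i| ≤ δ) ∧ M < |v t y| := by
  intro δ hδ M
  by_contra hcon
  push_neg at hcon
  -- hcon : ∀ t ∈ Ico 0 T, ∀ y, (∀ i, |y i| ≤ δ) → |v t y| ≤ M
  set M' : ℝ := max M 1 with hM'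
  have hM1 : (1:ℝ) ≤ M' := le_max_right _ _
  have hMM : M ≤ M' := le_max_left _ _
  set ε : ℝ := min (T / 2) (min (1 / 2) (δ / (16 * M'))) with hε
  have hε0 : 0 < ε := by
    refine lt_min (by linarith) (lt_min (by norm_num) ?_)
    apply div_pos hδ; linarith
  have hεT2 : ε ≤ T / 2 := min_le_left _ _
  have hεhalf : ε ≤ 1 / 2 := le_trans (min_le_right _ _) (min_le_left _ _)
  have hεM : ε ≤ δ / (16 * M') := le_trans (min_le_right _ _) (min_le_right _ _)
  have h2Mε : 2 * M' * ε ≤ δ / 8 := by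
    have h1 : 2 * M' * ε ≤ 2 * M' * (δ / (16 * M')) := by nlinarith
    have h2 : 2 * M' * (δ / (16 * M')) = δ / 8 := by
      field_simp
      ring
    linarith
  set s₀ : ℝ := T - ε with hs₀
  have hs₀0 : 0 ≤ s₀ := by simp only [hs₀]; linarith
  have hs₀T : s₀ < T := by simp only [hs₀]; linarith
  -- reference solution starting from the origin at time s₀
  obtain ⟨x0, hx0sol, hx0init⟩ := hex s₀ ⟨hs₀0, hs₀T⟩ 0
  have hx0lim := habs s₀ ⟨hs₀0, hs₀T⟩ x0 hx0sol
  obtain ⟨s, hss₀, hsT, hx0tail⟩ := tailSmall x0 hx0lim (by positivity : (0:ℝ) < δ / 8) hs₀T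
  have hs0 : 0 ≤ s := le_trans hs₀0 hss₀
  -- second solution starting with last coordinate δ/2 at time s
  set lastI : Fin n := ⟨n - 1, by omega⟩ with hlastI
  set ξ : EuclideanSpace ℝ (Fin n) := WithLp.toLp 2 (fun i : Fin n => if (i : ℕ) = n - 1 then δ / 2 else 0) with hξ
  obtain ⟨y, hysol, hyinit⟩ := hex s ⟨hs0, hsT⟩ ξ
  have hylim := habs s ⟨hs0, hsT⟩ y hysol
  obtain ⟨t₁, hst₁, ht₁T, hytail⟩ := tailSmall y hylim (by positivity : (0:ℝ) < δ / 8) hsT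
  -- basic facts
  have hTs : T - s ≤ ε := by
    have : s₀ ≤ s := hss₀
    simp only [hs₀] at this; linarith
  have hx0box : ∀ t ∈ Set.Ico s T, ∀ i, |x0 t i| ≤ δ := by
    intro t ht i; exact le_trans (hx0tail t ht i) (by linarith)
  -- derivative of last coordinates, cleaned up
  have hyder : ∀ t ∈ Set.Ico s T, HasDerivAt (fun τ => y τ lastI) (v t (y t) + d t) t := by
    intro t ht
    have h2 := (hysol t ht).2
    simpa using h2
  have hx0der : ∀ t ∈ Set.Ico s T, HasDerivAt (fun τ => x0 τ lastI) (v t (x0 t) + d t) t := by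
    intro t ht
    have h2 := (hx0sol t ⟨le_trans hss₀ ht.1, ht.2⟩).2
    simpa using h2
  -- continuity of coordinates of y on [s,T)
  have hycont : ∀ t ∈ Set.Ico s T, ∀ j : Fin n, ContinuousAt (fun τ => y τ j) t := by
    intro t ht j
    by_cases hj : (j : ℕ) + 1 < n
    · exact ((hysol t ht).1 j hj).continuousAt
    · have hjv : j = lastI := by
        apply Fin.ext
        have := j.isLt
        simp only [hlastI]
        omega
      rw [hjv]
      exact (hyder t ht).continuousAt
  have hycoord : ∀ j : Fin n, Filter.Tendsto (fun t => y t j)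
      (nhdsWithin T (Set.Iio T)) (nhds 0) := fun j => coordTendsto hylim j
  have hφlim : Filter.Tendsto (fun t => y t lastI - x0 t lastI)
      (nhdsWithin T (Set.Iio T)) (nhds 0) := by
    have := (hycoord lastI).sub (coordTendsto hx0lim lastI)
    simpa using this
  -- the key mean-value estimate along the last coordinate
  have hkey : ∀ a, s ≤ a → a < T → (∀ t ∈ Set.Ico a T, ∀ i, |y t i| ≤ δ) →
      |y a lastI - x0 a lastI| ≤ δ / 8 := by
    intro a hsa haT hybox
    have hd : ∀ t ∈ Set.Ico a T,
        HasDerivAt (fun τ => y τ lastI - x0 τ lastI) (v t (y t) - v t (x0 t)) t := by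
      intro t ht
      have ht' : t ∈ Set.Ico s T := ⟨le_trans hsa ht.1, ht.2⟩
      have := (hyder t ht').sub (hx0der t ht')
      have h2 : v t (y t) - v t (x0 t) = v t (y t) + d t - (v t (x0 t) + d t) := by ring
      rw [h2]; exact this
    have hbd : ∀ t ∈ Set.Ico a T, |v t (y t) - v t (x0 t)| ≤ 2 * M' := by
      intro t ht
      have ht0 : t ∈ Set.Ico (0:ℝ) T := ⟨le_trans hs0 (le_trans hsa ht.1), ht.2⟩
      have h1 : |v t (y t)| ≤ M := hcon t ht0 (y t) (hybox t ht)
      have h2 : |v t (x0 t)| ≤ M :=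
        hcon t ht0 (x0 t) (hx0box t ⟨le_trans hsa ht.1, ht.2⟩)
      have h1' := abs_le.mp (le_trans h1 hMM)
      have h2' := abs_le.mp (le_trans h2 hMM)
      apply abs_le.mpr
      constructor <;> linarith [h1'.1, h1'.2, h2'.1, h2'.2]
    have hb := lipBound haT hd hbd hφlim
    have hTa : T - a ≤ ε := by linarith [le_trans hsa (le_refl a), hTs, hsa]
    have hC : (0:ℝ) ≤ 2 * M' := by linarith
    calc |y a lastI - x0 a lastI| ≤ 2 * M' * (T - a) := hb
      _ ≤ 2 * M' * ε := mul_le_mul_of_nonneg_left hTa hC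
      _ ≤ δ / 8 := h2Mε
  -- value of y at time s
  have hys : y s lastI = δ / 2 := by
    rw [hyinit, hξ]
    exact if_pos rfl
  by_cases hbox : ∀ t ∈ Set.Icc s t₁, ∀ i, |y t i| < δ
  · -- y stays in the box on all of [s,T)
    have hybox : ∀ t ∈ Set.Ico s T, ∀ i, |y t i| ≤ δ := by
      intro t ht i
      rcases le_or_gt t t₁ with h | h
      · exact le_of_lt (hbox t ⟨ht.1, h⟩ i)
      · exact le_trans (hytail t ⟨le_of_lt h, ht.2⟩ i) (by linarith)
    have h1 := hkey s le_rfl hsT hybox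
    have h2 : |x0 s lastI| ≤ δ / 8 := hx0tail s ⟨le_rfl, hsT⟩ lastI
    have h3 := abs_sub_abs_le_abs_sub (y s lastI) (x0 s lastI)
    rw [hys] at h1 h3
    rw [abs_of_pos (by linarith : (0:ℝ) < δ / 2)] at h3
    linarith
  · -- y leaves the box; consider the last time it is outside
    push_neg at hbox
    obtain ⟨t₂, ht₂, i₂, hi₂⟩ := hbox
    -- the set of "bad" times
    set S : Set ℝ := ⋃ i : Fin n,
      (Set.Icc s t₁ ∩ (fun t => |y t i|) ⁻¹' Set.Ici δ) with hS
    have hSclosed : IsClosed S := by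
      apply isClosed_iUnion_of_finite
      intro i
      apply ContinuousOn.preimage_isClosed_of_isClosed _ isClosed_Icc isClosed_Ici
      intro t ht
      exact ((hycont t ⟨ht.1, lt_of_le_of_lt ht.2 ht₁T⟩ i).abs).continuousWithinAt
    have hSne : S.Nonempty := ⟨t₂, Set.mem_iUnion.mpr ⟨i₂, ht₂, hi₂⟩⟩
    have hSbdd : BddAbove S := by
      refine ⟨t₁, fun x hx => ?_⟩
      obtain ⟨i, hxi⟩ := Set.mem_iUnion.mp hx
      exact hxi.1.2
    set u : ℝ := sSup S with hu
    have huS : u ∈ S := hSclosed.csSup_mem hSne hSbdd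
    obtain ⟨i, hiu⟩ := Set.mem_iUnion.mp huS
    have hus : s ≤ u := hiu.1.1
    have hut₁ : u ≤ t₁ := hiu.1.2
    have hui : δ ≤ |y u i| := hiu.2
    have huT : u < T := lt_of_le_of_lt hut₁ ht₁T
    have hu_lt : u < t₁ := by
      rcases lt_or_eq_of_le hut₁ with h | h
      · exact h
      · exfalso
        have := hytail t₁ ⟨le_rfl, ht₁T⟩ i
        rw [h] at hui
        linarith
    have hafter : ∀ t, u < t → t ≤ t₁ → ∀ j, |y t j| < δ := by
      intro t htu htt₁ j
      by_contra hcon2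
      push_neg at hcon2
      have h1 : t ∈ S := Set.mem_iUnion.mpr
        ⟨j, ⟨⟨le_trans hus (le_of_lt htu), htt₁⟩, hcon2⟩⟩
      have := le_csSup hSbdd h1
      rw [← hu] at this
      linarith
    -- at time u all coordinates are ≤ δ (by continuity from the right)
    have hboxu : ∀ j, |y u j| ≤ δ := by
      intro j
      have hc : ContinuousWithinAt (fun τ => |y τ j|) (Set.Ioi u) u :=
        ((hycont u ⟨hus, huT⟩ j).abs).continuousWithinAt
      refine le_of_tendsto hc ?_
      filter_upwards [Ioc_mem_nhdsGT hu_lt] with t ht2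
      exact le_of_lt (hafter t ht2.1 ht2.2 j)
    have hyboxtail : ∀ t ∈ Set.Ico u T, ∀ j, |y t j| ≤ δ := by
      intro t ht j
      rcases eq_or_lt_of_le ht.1 with h | h
      · rw [← h]; exact hboxu j
      · rcases le_or_gt t t₁ with h2 | h2
        · exact le_of_lt (hafter t h h2 j)
        · exact le_trans (hytail t ⟨le_of_lt h2, ht.2⟩ j) (by linarith)
    -- case on which coordinate is at the boundary at time u
    by_cases hi : (i : ℕ) + 1 < n
    · -- a non-last coordinate: its derivative is bounded by δ, contradiction
      have hd : ∀ t ∈ Set.Ico u T,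
          HasDerivAt (fun τ => y τ i) (y t ⟨(i : ℕ) + 1, hi⟩) t := by
        intro t ht
        exact (hysol t ⟨le_trans hus ht.1, ht.2⟩).1 i hi
      have hbd : ∀ t ∈ Set.Ico u T, |y t ⟨(i : ℕ) + 1, hi⟩| ≤ δ :=
        fun t ht => hyboxtail t ht _
      have hb := lipBound huT hd hbd (hycoord i)
      have hTu : T - u ≤ ε := by linarith [le_trans hss₀ hus]
      have : |y u i| ≤ δ * ε := by
        calc |y u i| ≤ δ * (T - u) := hb
          _ ≤ δ * ε := mul_le_mul_of_nonneg_left hTu (le_of_lt hδ)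
      nlinarith
    · -- the last coordinate: use the controller bound, contradiction
      have hjv : i = lastI := by
        apply Fin.ext
        have := i.isLt
        simp only [hlastI]
        omega
      rw [hjv] at hui
      have h1 := hkey u hus huT hyboxtail
      have h2 : |x0 u lastI| ≤ δ / 8 := hx0tail u ⟨hus, huT⟩ lastI
      have h3 := abs_sub_abs_le_abs_sub (y u lastI) (x0 u lastI)
      linarith
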